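/- arXiv:2509.18911 — 2 statements merged into one kernel-verified Lean document; each statement's English description precedes it below -/
import Mathlib

section
/- Let Q be a symmetric n×n matrix, let λ_min be its smallest eigenvalue, and suppose λ_min < 0. Then for α ≥ -λ_min, the function x ↦ xᵀ Q x + dᵀ x + α · Σ_j (x_j - l_j)(x_j - u_j) is convex on ℝ^n, and for all x with l_j ≤ x_j ≤ u_j (all j), its value is at most xᵀ Q x + dᵀ x. -/
open Matrix

private lemma quad_convexOn {n : ℕ} (M : Matrix (Fin n) (Fin n) ℝ) (hM : M.PosSemidef)
    (c : Fin n → ℝ) (k : ℝ) :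
    ConvexOn ℝ Set.univ (fun x : Fin n → ℝ => x ⬝ᵥ M.mulVec x + c ⬝ᵥ x + k) := by
  refine ⟨convex_univ, fun x _ y _ a b ha hb hab => ?_⟩
  have h0 : 0 ≤ (x - y) ⬝ᵥ M.mulVec (x - y) := by
    have := hM.dotProduct_mulVec_nonneg (x - y); simpa using this
  simp only [smul_eq_mul]
  have hexp : ∀ z w : Fin n → ℝ, ∀ s t : ℝ,
      (s • z + t • w) ⬝ᵥ M.mulVec (s • z + t • w)
        = s * s * (z ⬝ᵥ M.mulVec z) + s * t * (z ⬝ᵥ M.mulVec w)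
          + t * s * (w ⬝ᵥ M.mulVec z) + t * t * (w ⬝ᵥ M.mulVec w) := by
    intro z w s t
    simp [Matrix.mulVec_add, Matrix.mulVec_smul, dotProduct_add, add_dotProduct,
      dotProduct_smul, smul_dotProduct, smul_eq_mul]
    ring
  have hsub : (x - y) ⬝ᵥ M.mulVec (x - y)
      = x ⬝ᵥ M.mulVec x - x ⬝ᵥ M.mulVec y - y ⬝ᵥ M.mulVec x + y ⬝ᵥ M.mulVec y := by
    simp [Matrix.mulVec_sub, dotProduct_sub, sub_dotProduct]
    ring
  have hlin : c ⬝ᵥ (a • x + b • y) = a * (c ⬝ᵥ x) + b * (c ⬝ᵥ y) := by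
    simp [dotProduct_add, dotProduct_smul, smul_eq_mul]
  rw [hexp, hlin]
  rw [hsub] at h0
  have hb1 : b = 1 - a := by linarith
  subst hb1
  nlinarith [mul_nonneg (mul_nonneg ha hb) h0]

private lemma shifted_posSemidef {n : ℕ} (Q : Matrix (Fin n) (Fin n) ℝ)
    (hQ : Q.IsHermitian) (α : ℝ) (h : ∀ i, 0 ≤ hQ.eigenvalues i + α) :
    (Q + α • (1 : Matrix (Fin n) (Fin n) ℝ)).PosSemidef := by
  set U : Matrix (Fin n) (Fin n) ℝ := (hQ.eigenvectorUnitary : Matrix (Fin n) (Fin n) ℝ)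
  have hU : U * star U = 1 := (Matrix.mem_unitaryGroup_iff).mp hQ.eigenvectorUnitary.2
  have key : Q + α • (1 : Matrix (Fin n) (Fin n) ℝ)
      = U * diagonal (fun i => hQ.eigenvalues i + α) * star U := by
    have hspec := hQ.spectral_theorem
    have h1 : α • (1 : Matrix (Fin n) (Fin n) ℝ) = U * (α • 1) * star U := by
      rw [Matrix.mul_smul, Matrix.mul_one, Matrix.smul_mul, hU]
    calc Q + α • (1 : Matrix (Fin n) (Fin n) ℝ)
        = U * diagonal (RCLike.ofReal ∘ hQ.eigenvalues) * star U + U * (α • 1) * star U := by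
          rw [← h1]; exact congrArg (· + _) hspec
      _ = U * (diagonal (RCLike.ofReal ∘ hQ.eigenvalues) + α • 1) * star U := by
          rw [Matrix.mul_add, Matrix.add_mul]
      _ = U * diagonal (fun i => hQ.eigenvalues i + α) * star U := by
          congr 1
          congr 1
          ext i j
          by_cases hij : i = j <;>
            simp [hij, Matrix.diagonal_apply, Matrix.one_apply, Matrix.smul_apply]
  rw [key, Matrix.star_eq_conjTranspose]
  exact (posSemidef_diagonal_iff.mpr h).mul_mul_conjTranspose_same U

/-- α-BB convexification: if `λmin` is the smallest eigenvalue of the symmetric matrix `Q`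
and `λmin < 0`, then for `α ≥ -λmin` the perturbed quadratic
`x ↦ xᵀ Q x + dᵀ x + α Σⱼ (xⱼ - lⱼ)(xⱼ - uⱼ)` is convex on `ℝⁿ` and underestimates
`xᵀ Q x + dᵀ x` on the box `[l, u]`. -/
theorem alphaBB_convex_underestimator (n : ℕ) (Q : Matrix (Fin n) (Fin n) ℝ)
    (hQ : Q.IsHermitian) (d l u : Fin n → ℝ) (lammin α : ℝ)
    (hmin_le : ∀ i, lammin ≤ hQ.eigenvalues i)
    (hmin_mem : ∃ i, hQ.eigenvalues i = lammin)
    (hneg : lammin < 0) (hα : -lammin ≤ α) :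
    ConvexOn ℝ Set.univ
      (fun x : Fin n → ℝ =>
        x ⬝ᵥ Q.mulVec x + d ⬝ᵥ x + α * ∑ j, (x j - l j) * (x j - u j)) ∧
    ∀ x : Fin n → ℝ, (∀ j, l j ≤ x j ∧ x j ≤ u j) →
      x ⬝ᵥ Q.mulVec x + d ⬝ᵥ x + α * ∑ j, (x j - l j) * (x j - u j) ≤
        x ⬝ᵥ Q.mulVec x + d ⬝ᵥ x := by
  constructor
  · -- convexity
    have hM : (Q + α • (1 : Matrix (Fin n) (Fin n) ℝ)).PosSemidef :=
      shifted_posSemidef Q hQ α (fun i => by have := hmin_le i; linarith)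
    have hfun : (fun x : Fin n → ℝ =>
        x ⬝ᵥ Q.mulVec x + d ⬝ᵥ x + α * ∑ j, (x j - l j) * (x j - u j))
        = (fun x : Fin n → ℝ =>
            x ⬝ᵥ (Q + α • (1 : Matrix (Fin n) (Fin n) ℝ)).mulVec x
            + (fun j => d j - α * (l j + u j)) ⬝ᵥ x + α * ∑ j, l j * u j) := by
      funext x
      simp only [Matrix.add_mulVec, Matrix.smul_mulVec, Matrix.one_mulVec,
        dotProduct, Finset.mul_sum, Pi.add_apply, Pi.smul_apply, smul_eq_mul]
      rw [← Finset.sum_add_distrib, ← Finset.sum_add_distrib,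
        ← Finset.sum_add_distrib, ← Finset.sum_add_distrib]
      apply Finset.sum_congr rfl
      intro j _
      ring
    rw [hfun]
    exact quad_convexOn _ hM _ _
  · intro x hx
    have hs : α * ∑ j, (x j - l j) * (x j - u j) ≤ 0 := by
      apply mul_nonpos_of_nonneg_of_nonpos
      · linarith
      · apply Finset.sum_nonpos
        intro j _
        exact mul_nonpos_of_nonneg_of_nonpos (by linarith [(hx j).1]) (by linarith [(hx j).2])
    linarith
end

section
/- Let G be a chordal graph on vertex set V and let C_1, …, C_p be its maximal cliques. A symmetric matrix X indexed by V, with X_{ij} = 0 whenever i ≠ j and {i,j} is not an edge of G, is positive semidefinite if and only if X can be written as X = Σ_{k=1}^p E_k^ᵀ X_k E_k, where each X_k is a positive semidefinite matrix of size |C_k| and E_k is the 0/1 matrix selecting the rows/columns indexed by C_k. -/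
open Matrix

/-- A graph is chordal if every cycle of length at least 4 has a chord. -/
def IsChordal {V : Type*} (G : SimpleGraph V) : Prop :=
  ∀ n : ℕ, 4 ≤ n → ∀ f : ZMod n → V, Function.Injective f →
    (∀ i, G.Adj (f i) (f (i + 1))) →
    ∃ i j : ZMod n, j ≠ i ∧ j ≠ i + 1 ∧ j ≠ i - 1 ∧ G.Adj (f i) (f j)

/-- The `|V| × |V|` matrix `E_kᵀ X_k E_k` obtained by embedding a matrix indexed by a
finite set of vertices `C` into the rows/columns indexed by `C`, with zeros elsewhere. -/
def cliqueEmbed {V : Type*} [Fintype V] [DecidableEq V] (C : Finset V)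
    (Y : Matrix C C ℝ) : Matrix V V ℝ :=
  Matrix.of fun i j =>
    if hi : i ∈ C then (if hj : j ∈ C then Y ⟨i, hi⟩ ⟨j, hj⟩ else 0) else 0

universe u

namespace ChordalAux

section
variable {V : Type*} (G : SimpleGraph V)

/-- A vertex is simplicial if its neighbourhood is a clique. -/
def Simpl (v : V) : Prop :=
  ∀ a b, G.Adj v a → G.Adj v b → a ≠ b → G.Adj a b

/-- Reachability by a walk avoiding the set `S`. -/
def CReach (S : Set V) (u v : V) : Prop :=
  ∃ (n : ℕ) (g : ℕ → V), g 0 = u ∧ g n = v ∧ (∀ i < n, G.Adj (g i) (g (i + 1))) ∧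
    (∀ i ≤ n, g i ∉ S)

variable {G}

lemma CReach.notMem_left {S : Set V} {u v : V} (h : CReach G S u v) : u ∉ S := by
  obtain ⟨n, g, h0, hn, _, hS⟩ := h
  simpa [h0] using hS 0 (Nat.zero_le _)

lemma CReach.notMem_right {S : Set V} {u v : V} (h : CReach G S u v) : v ∉ S := by
  obtain ⟨n, g, h0, hn, _, hS⟩ := h
  simpa [hn] using hS n le_rfl

lemma CReach.refl {S : Set V} {u : V} (hu : u ∉ S) : CReach G S u u :=
  ⟨0, fun _ => u, rfl, rfl, by omega, fun _ _ => hu⟩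

lemma CReach.symm {S : Set V} {u v : V} (h : CReach G S u v) : CReach G S v u := by
  obtain ⟨n, g, h0, hn, hadj, hS⟩ := h
  refine ⟨n, fun i => g (n - i), by simp [hn], by simp [h0], fun i hi => ?_, fun i hi => hS _ (by omega)⟩
  show G.Adj (g (n - i)) (g (n - (i + 1)))
  rw [show n - i = (n - (i+1)) + 1 from by omega]
  exact (hadj (n - (i+1)) (by omega)).symm

lemma CReach.trans {S : Set V} {u v w : V} (h1 : CReach G S u v) (h2 : CReach G S v w) :
    CReach G S u w := by
  obtain ⟨n, g, h0, hn, hadj, hS⟩ := h1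
  obtain ⟨m, g', h0', hm', hadj', hS'⟩ := h2
  refine ⟨n + m, fun i => if i ≤ n then g i else g' (i - n), by simp [h0], ?_, ?_, ?_⟩
  · show (if n + m ≤ n then g (n + m) else g' (n + m - n)) = w
    by_cases h : n + m ≤ n
    · have hm0 : m = 0 := by omega
      simp only [if_pos h]
      rw [show n + m = n from by omega, hn, ← h0']
      rw [hm0] at hm'; exact hm'.symm ▸ rfl
    · simp only [if_neg h]; rw [show n + m - n = m from by omega, hm']
  · intro i hi
    show G.Adj (if i ≤ n then g i else g' (i - n)) (if i + 1 ≤ n then g (i+1) else g' (i + 1 - n))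
    by_cases h : i + 1 ≤ n
    · simp only [if_pos (by omega : i ≤ n), if_pos h]
      exact hadj i (by omega)
    · by_cases h' : i ≤ n
      · have hin : i = n := by omega
        subst hin
        rw [if_pos le_rfl, if_neg h, show i + 1 - i = 1 from by omega, hn, ← h0']
        exact hadj' 0 (by omega)
      · simp only [if_neg h', if_neg h]
        rw [show i + 1 - n = (i - n) + 1 from by omega]
        exact hadj' (i - n) (by omega)
  · intro i hi
    show (if i ≤ n then g i else g' (i - n)) ∉ S
    by_cases h : i ≤ n
    · simpa [h] using hS i h
    · simpa [h] using hS' (i - n) (by omega)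

lemma CReach.step {S : Set V} {u v w : V} (h : CReach G S u v) (hadj : G.Adj v w)
    (hw : w ∉ S) : CReach G S u w :=
  h.trans ⟨1, fun i => if i = 0 then v else w, by simp, by simp, by
      intro i hi; simp only [show i = 0 from by omega]; simpa using hadj,
    by intro i hi; interval_cases i <;> simp [h.notMem_right, hw]⟩

/-- every vertex of a chain avoiding `S` starting at `u` is `CReach`-able from `u`. -/
lemma CReach.of_prefix {S : Set V} {u : V} {n : ℕ} {g : ℕ → V} (h0 : g 0 = u)
    (hadj : ∀ i < n, G.Adj (g i) (g (i + 1))) (hS : ∀ i ≤ n, g i ∉ S) {k : ℕ} (hk : k ≤ n) :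
    CReach G S u (g k) :=
  ⟨k, g, h0, rfl, fun i hi => hadj i (by omega), fun i hi => hS i (by omega)⟩

/-- `S` separates `a` from `b`. -/
def Cut (G : SimpleGraph V) (S : Set V) (a b : V) : Prop :=
  a ∉ S ∧ b ∉ S ∧ ¬ CReach G S a b

lemma Cut.symm {S : Set V} {a b : V} (h : Cut G S a b) : Cut G S b a :=
  ⟨h.2.1, h.1, fun hr => h.2.2 hr.symm⟩

/-- Induced subgraphs of chordal graphs are chordal. -/
lemma isChordal_induce {G : SimpleGraph V} (h : IsChordal G) (W : Set V) :
    IsChordal (G.induce W) := by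
  intro n hn f hf hadj
  obtain ⟨i, j, h1, h2, h3, h4⟩ :=
    h n hn (fun i => (f i : V)) (fun i j hij => hf (Subtype.coe_injective hij)) (fun i => hadj i)
  exact ⟨i, j, h1, h2, h3, h4⟩


end

section
variable {V : Type*} {G : SimpleGraph V}

/-- chain from x to y of length n with interior inside A -/
def ChainP (G : SimpleGraph V) (A : Set V) (x y : V) (n : ℕ) : Prop :=
  ∃ g : ℕ → V, g 0 = x ∧ g n = y ∧ (∀ i < n, G.Adj (g i) (g (i + 1))) ∧
    (∀ i, 0 < i → i < n → g i ∈ A)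

lemma chain_inj {A : Set V} {x y : V} {n : ℕ} {g : ℕ → V}
    (h0 : g 0 = x) (hn : g n = y) (hadj : ∀ i < n, G.Adj (g i) (g (i + 1)))
    (hA : ∀ i, 0 < i → i < n → g i ∈ A)
    (hmin : ∀ m < n, ¬ ChainP G A x y m) (hxy : x ≠ y) (hyA : y ∉ A) :
    ∀ s t, s < t → t ≤ n → g s ≠ g t := by
  intro s t hst htn heq
  rcases eq_or_lt_of_le htn with rfl | htn'
  · rcases Nat.eq_zero_or_pos s with rfl | hs
    · exact hxy (h0 ▸ hn ▸ heq)
    · exact hyA (hn ▸ heq ▸ hA s hs hst)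
  · -- shortcut: remove the loop from s to t
    refine hmin (n - (t - s)) (by omega) ⟨fun i => if i ≤ s then g i else g (i + (t - s)),
      by simpa using h0, ?_, ?_, ?_⟩
    · have hns : ¬ (n - (t - s) ≤ s) := by omega
      simp only [if_neg hns]
      rw [show n - (t - s) + (t - s) = n from by omega, hn]
    · intro i hi
      by_cases h1 : i + 1 ≤ s
      · simpa [show i ≤ s from by omega, h1] using hadj i (by omega)
      · by_cases h2 : i ≤ s
        · have his : i = s := by omega
          simp only [if_pos h2, if_neg h1]
          rw [show i + 1 + (t - s) = t + 1 from by omega, his, heq]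
          exact hadj t (by omega)
        · simp only [if_neg h2, if_neg h1]
          rw [show i + 1 + (t - s) = (i + (t - s)) + 1 from by omega]
          exact hadj _ (by omega)
    · intro i hi0 hi
      by_cases h2 : i ≤ s
      · simpa [h2] using hA i hi0 (by omega)
      · simp only [if_neg h2]
        exact hA _ (by omega) (by omega)

lemma chain_no_chord {A : Set V} {x y : V} {n : ℕ} {g : ℕ → V}
    (h0 : g 0 = x) (hn : g n = y) (hadj : ∀ i < n, G.Adj (g i) (g (i + 1)))
    (hA : ∀ i, 0 < i → i < n → g i ∈ A)
    (hmin : ∀ m < n, ¬ ChainP G A x y m) :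
    ∀ s t, s + 2 ≤ t → t ≤ n → ¬ (s = 0 ∧ t = n) → ¬ G.Adj (g s) (g t) := by
  intro s t hst htn hne hadjst
  refine hmin (n - (t - s - 1)) (by omega) ⟨fun i => if i ≤ s then g i else g (i + (t - s - 1)),
    by simpa using h0, ?_, ?_, ?_⟩
  · have hms : ¬ (n - (t - s - 1) ≤ s) := by omega
    simp only [if_neg hms]
    rw [show n - (t - s - 1) + (t - s - 1) = n from by omega, hn]
  · intro i hi
    by_cases h1 : i + 1 ≤ s
    · simpa [show i ≤ s from by omega, h1] using hadj i (by omega)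
    · by_cases h2 : i ≤ s
      · have his : i = s := by omega
        simp only [if_pos h2, if_neg h1]
        rw [show i + 1 + (t - s - 1) = t from by omega, his]
        exact hadjst
      · simp only [if_neg h2, if_neg h1]
        rw [show i + 1 + (t - s - 1) = (i + (t - s - 1)) + 1 from by omega]
        exact hadj _ (by omega)
  · intro i hi0 hi
    by_cases h2 : i ≤ s
    · simpa [h2] using hA i hi0 (by omega)
    · simp only [if_neg h2]
      exact hA _ (by omega) (by omega)

lemma exists_nbr {S : Set V} {a b x : V} (hSep : Cut G S a b)
    (hx : x ∈ S) (hne : ¬ Cut G (S \ {x}) a b) :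
    ∃ u, CReach G S a u ∧ G.Adj u x := by
  classical
  have hreach : CReach G (S \ {x}) a b := by
    by_contra h
    exact hne ⟨fun hm => hSep.1 hm.1, fun hm => hSep.2.1 hm.1, h⟩
  obtain ⟨n, g, h0, hn, hadj, hS⟩ := hreach
  have hex : ∃ i, i ≤ n ∧ g i ∈ S := by
    by_contra h
    push_neg at h
    exact hSep.2.2 ⟨n, g, h0, hn, hadj, fun i hi => h i hi⟩
  obtain ⟨hi0n, hi0S⟩ : Nat.find hex ≤ n ∧ g (Nat.find hex) ∈ S := Nat.find_spec hex
  set i0 := Nat.find hex with hi0def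
  have hminS : ∀ j < i0, g j ∉ S := fun j hj hjS => Nat.find_min hex hj ⟨by omega, hjS⟩
  have hgx : g i0 = x := by
    have h2 := hS i0 hi0n
    rw [Set.mem_diff] at h2
    push_neg at h2
    simpa using h2 hi0S
  have hi00 : 0 < i0 := by
    rcases Nat.eq_zero_or_pos i0 with h | h
    · exfalso; rw [h, h0] at hi0S; exact hSep.1 hi0S
    · exact h
  refine ⟨g (i0 - 1), CReach.of_prefix (n := i0 - 1) h0 (fun i hi => hadj i (by omega))
      (fun i hi => hminS i (by omega)) le_rfl, ?_⟩
  have h3 := hadj (i0 - 1) (by omega)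
  rwa [show i0 - 1 + 1 = i0 from by omega, hgx] at h3

lemma creach_chain {S : Set V} {a u v : V} (hu : CReach G S a u) (hv : CReach G S a v) :
    ∃ (n : ℕ) (g : ℕ → V), g 0 = u ∧ g n = v ∧ (∀ i < n, G.Adj (g i) (g (i + 1))) ∧
      (∀ i ≤ n, CReach G S a (g i)) := by
  obtain ⟨n, g, h0, hn, hadj, hS⟩ := hu.symm.trans hv
  exact ⟨n, g, h0, hn, hadj, fun i hi =>
    hu.trans (CReach.of_prefix (n := i) h0 (fun j hj => hadj j (by omega))
      (fun j hj => hS j (by omega)) le_rfl)⟩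

lemma sep_clique (hch : IsChordal G) {S : Set V} {a b : V} (hSep : Cut G S a b)
    (hmin : ∀ x ∈ S, ¬ Cut G (S \ {x}) a b) :
    ∀ x ∈ S, ∀ y ∈ S, x ≠ y → G.Adj x y := by
  classical
  intro x hx y hy hxy
  by_contra hnadj
  set A : Set V := {u | CReach G S a u} with hA
  set B : Set V := {u | CReach G S b u} with hB
  have hmemA : ∀ {u}, u ∈ A → CReach G S a u := fun h => h
  have hmemB : ∀ {u}, u ∈ B → CReach G S b u := fun h => h
  have hReachAB : ∀ u ∈ A, ∀ v ∈ B, u = v ∨ G.Adj u v → False := by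
    intro u hu v hv h
    rcases h with rfl | hadj
    · exact hSep.2.2 ((hmemA hu).trans (hmemB hv).symm)
    · exact hSep.2.2 (((hmemA hu).step hadj (hmemB hv).notMem_right).trans (hmemB hv).symm)
  have hSA : ∀ u ∈ A, u ∉ S := fun u hu => (hmemA hu).notMem_right
  have hSB : ∀ u ∈ B, u ∉ S := fun u hu => (hmemB hu).notMem_right
  obtain ⟨ax, hax, haxx⟩ := exists_nbr hSep hx (hmin x hx)
  obtain ⟨ay, hay, hayy⟩ := exists_nbr hSep hy (hmin y hy)
  obtain ⟨bx, hbx, hbxx⟩ := exists_nbr hSep.symm hx (fun h => hmin x hx h.symm)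
  obtain ⟨bv, hbv, hbvv⟩ := exists_nbr hSep.symm hy (fun h => hmin y hy h.symm)
  have hexA : ∃ n, ChainP G A x y n := by
    obtain ⟨m, d, hd0, hdm, hdadj, hdA⟩ := creach_chain hax hay
    refine ⟨m + 2, fun i => if i = 0 then x else if i ≤ m + 1 then d (i - 1) else y,
      by simp, by simp [show ¬ (m + 2 = 0) from by omega, show ¬ (m + 2 ≤ m + 1) from by omega],
      ?_, ?_⟩
    · intro i hi
      show G.Adj (if i = 0 then x else if i ≤ m + 1 then d (i - 1) else y)
        (if i + 1 = 0 then x else if i + 1 ≤ m + 1 then d (i + 1 - 1) else y)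
      by_cases h0 : i = 0
      · subst h0
        simp only [if_pos rfl, if_neg (by omega : ¬ (0 + 1 = 0)), if_pos (by omega : 0 + 1 ≤ m + 1)]
        rw [show 0 + 1 - 1 = 0 from rfl, hd0]
        exact haxx.symm
      · by_cases h1 : i + 1 ≤ m + 1
        · simp only [if_neg h0, if_pos (show i ≤ m + 1 from by omega),
            if_neg (show ¬ (i + 1 = 0) from by omega), if_pos h1]
          rw [show i + 1 - 1 = (i - 1) + 1 from by omega]
          exact hdadj (i - 1) (by omega)
        · simp only [if_neg h0, if_pos (show i ≤ m + 1 from by omega),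
            if_neg (show ¬ (i + 1 = 0) from by omega), if_neg h1]
          rw [show i - 1 = m from by omega, hdm]
          exact hayy
    · intro i hi0 hin
      show (if i = 0 then x else if i ≤ m + 1 then d (i - 1) else y) ∈ A
      simp only [if_neg (show ¬ i = 0 from by omega), if_pos (show i ≤ m + 1 from by omega)]
      exact hdA (i - 1) (by omega)
  have hexB : ∃ n, ChainP G B y x n := by
    obtain ⟨m, d, hd0, hdm, hdadj, hdB⟩ := creach_chain hbv hbx
    refine ⟨m + 2, fun i => if i = 0 then y else if i ≤ m + 1 then d (i - 1) else x,
      by simp, by simp [show ¬ (m + 2 = 0) from by omega, show ¬ (m + 2 ≤ m + 1) from by omega],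
      ?_, ?_⟩
    · intro i hi
      show G.Adj (if i = 0 then y else if i ≤ m + 1 then d (i - 1) else x)
        (if i + 1 = 0 then y else if i + 1 ≤ m + 1 then d (i + 1 - 1) else x)
      by_cases h0 : i = 0
      · subst h0
        simp only [if_pos rfl, if_neg (by omega : ¬ (0 + 1 = 0)), if_pos (by omega : 0 + 1 ≤ m + 1)]
        rw [show 0 + 1 - 1 = 0 from rfl, hd0]
        exact hbvv.symm
      · by_cases h1 : i + 1 ≤ m + 1
        · simp only [if_neg h0, if_pos (show i ≤ m + 1 from by omega),
            if_neg (show ¬ (i + 1 = 0) from by omega), if_pos h1]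
          rw [show i + 1 - 1 = (i - 1) + 1 from by omega]
          exact hdadj (i - 1) (by omega)
        · simp only [if_neg h0, if_pos (show i ≤ m + 1 from by omega),
            if_neg (show ¬ (i + 1 = 0) from by omega), if_neg h1]
          rw [show i - 1 = m from by omega, hdm]
          exact hbxx
    · intro i hi0 hin
      show (if i = 0 then y else if i ≤ m + 1 then d (i - 1) else x) ∈ B
      simp only [if_neg (show ¬ i = 0 from by omega), if_pos (show i ≤ m + 1 from by omega)]
      exact hdB (i - 1) (by omega)
  obtain ⟨gP, hP0, hPn, hPadj, hPA⟩ := Nat.find_spec hexA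
  obtain ⟨gQ, hQ0, hQn, hQadj, hQB⟩ := Nat.find_spec hexB
  set nP := Nat.find hexA with hnPdef
  set nQ := Nat.find hexB with hnQdef
  have hPmin : ∀ m < nP, ¬ ChainP G A x y m := fun m hm => Nat.find_min hexA hm
  have hQmin : ∀ m < nQ, ¬ ChainP G B y x m := fun m hm => Nat.find_min hexB hm
  have hxA : x ∉ A := fun h => hSA x h hx
  have hyA : y ∉ A := fun h => hSA y h hy
  have hxB : x ∉ B := fun h => hSB x h hx
  have hyB : y ∉ B := fun h => hSB y h hy
  have hnP2 : 2 ≤ nP := by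
    by_contra h
    interval_cases nP
    · exact hxy (by rw [← hP0, hPn])
    · exact hnadj (by have := hPadj 0 (by omega); rwa [hP0, hPn] at this)
  have hnQ2 : 2 ≤ nQ := by
    by_contra h
    interval_cases nQ
    · exact hxy (by rw [← hQn, hQ0])
    · exact hnadj (by have := hQadj 0 (by omega); rw [hQ0, hQn] at this; exact this.symm)
  set n := nP + nQ with hndef
  have hn4 : 4 ≤ n := by omega
  set c : ℕ → V := fun i => if i ≤ nP then gP i else gQ (i - nP) with hcdef
  have hcP : ∀ u, u ≤ nP → c u = gP u := fun u hu => if_pos hu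
  have hcQ : ∀ u, nP ≤ u → c u = gQ (u - nP) := by
    intro u hu
    rcases eq_or_lt_of_le hu with rfl | h
    · rw [hcP nP le_rfl, hPn, Nat.sub_self, hQ0]
    · exact if_neg (by omega)
  have hc0 : c 0 = x := by rw [hcP 0 (by omega), hP0]
  have hcn : c n = x := by rw [hcQ n (by omega), show n - nP = nQ from by omega, hQn]
  have hcnP : c nP = y := by rw [hcP nP le_rfl, hPn]
  have hcadj : ∀ u, u < n → G.Adj (c u) (c (u + 1)) := by
    intro u hu
    by_cases h1 : u + 1 ≤ nP
    · rw [hcP u (by omega), hcP (u + 1) h1]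
      exact hPadj u (by omega)
    · rw [hcQ (u + 1) (by omega)]
      by_cases h2 : u ≤ nP
      · have hu' : u = nP := by omega
        rw [hcP u h2, hu', hPn, ← hQ0, show nP + 1 - nP = 0 + 1 from by omega]
        exact hQadj 0 (by omega)
      · rw [hcQ u (by omega), show u + 1 - nP = (u - nP) + 1 from by omega]
        exact hQadj (u - nP) (by omega)
  have key : ∀ s t, s + 2 ≤ t → t ≤ n - 1 → ¬ (s = 0 ∧ t = n - 1) → ¬ G.Adj (c s) (c t) := by
    intro s t hst htn hne hadj
    by_cases htP : t ≤ nP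
    · by_cases h0 : s = 0 ∧ t = nP
      · apply hnadj
        rw [h0.1, h0.2, hc0, hcnP] at hadj
        exact hadj
      · rw [hcP s (by omega), hcP t htP] at hadj
        exact chain_no_chord hP0 hPn hPadj hPA hPmin s t hst htP h0 hadj
    · by_cases hsP : nP ≤ s
      · rw [hcQ s hsP, hcQ t (by omega)] at hadj
        exact chain_no_chord hQ0 hQn hQadj hQB hQmin (s - nP) (t - nP) (by omega) (by omega)
          (by rintro ⟨h1, h2⟩; omega) hadj
      · push_neg at hsP
        have htB : c t ∈ B := by
          rw [hcQ t (by omega)]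
          exact hQB (t - nP) (by omega) (by omega)
        rcases Nat.eq_zero_or_pos s with rfl | hs
        · have hts : t ≠ n - 1 := fun h => hne ⟨rfl, h⟩
          have hadj2 : G.Adj (gQ (t - nP)) (gQ nQ) := by
            rw [hQn]
            rw [hc0, hcQ t (by omega)] at hadj
            exact hadj.symm
          exact chain_no_chord hQ0 hQn hQadj hQB hQmin (t - nP) nQ (by omega) le_rfl
            (by rintro ⟨h1, h2⟩; omega) hadj2
        · have hsA : c s ∈ A := by
            rw [hcP s (by omega)]
            exact hPA s hs hsP
          exact hReachAB _ hsA _ htB (Or.inr hadj)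
  have hcinj : ∀ s t, s < t → t ≤ n - 1 → c s ≠ c t := by
    intro s t hst htn heq
    by_cases htP : t ≤ nP
    · rw [hcP s (by omega), hcP t htP] at heq
      exact chain_inj hP0 hPn hPadj hPA hPmin hxy hyA s t hst htP heq
    · by_cases hsP : nP ≤ s
      · rw [hcQ s hsP, hcQ t (by omega)] at heq
        exact chain_inj hQ0 hQn hQadj hQB hQmin (Ne.symm hxy) hxB (s - nP) (t - nP)
          (by omega) (by omega) heq
      · push_neg at hsP
        have htB : c t ∈ B := by
          rw [hcQ t (by omega)]
          exact hQB (t - nP) (by omega) (by omega)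
        rcases Nat.eq_zero_or_pos s with rfl | hs
        · rw [hc0] at heq
          exact hSB _ htB (heq ▸ hx)
        · have hsA : c s ∈ A := by
            rw [hcP s (by omega)]
            exact hPA s hs hsP
          exact hReachAB _ hsA _ htB (Or.inl heq)
  haveI : NeZero n := ⟨by omega⟩
  haveI : Fact (1 < n) := ⟨by omega⟩
  have hvalinj : ∀ {u v : ZMod n}, u.val = v.val → u = v := fun h => ZMod.val_injective n h
  obtain ⟨i, j, hji, hji1, hji2, hadjc⟩ := hch n hn4 (fun i => c i.val)
    (by
      intro i j hij
      by_contra hne'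
      have hvne : i.val ≠ j.val := fun h => hne' (hvalinj h)
      rcases Nat.lt_or_ge i.val j.val with h | h
      · exact hcinj i.val j.val h (by have := ZMod.val_lt j; omega) hij
      · exact hcinj j.val i.val (by omega) (by have := ZMod.val_lt i; omega) hij.symm)
    (by
      intro i
      have hvlt : i.val < n := ZMod.val_lt i
      have hval1 : (i + 1).val = (i.val + 1) % n := by rw [ZMod.val_add, ZMod.val_one]
      show G.Adj (c i.val) (c (i + 1).val)
      by_cases hlast : i.val = n - 1
      · have hz : (i + 1).val = 0 := by
          rw [hval1, hlast, show n - 1 + 1 = n from by omega, Nat.mod_self]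
        rw [hz, hlast, hc0, ← hcn]
        have := hcadj (n - 1) (by omega)
        rwa [show n - 1 + 1 = n from by omega] at this
      · have : (i + 1).val = i.val + 1 := by rw [hval1, Nat.mod_eq_of_lt (by omega)]
        rw [this]
        exact hcadj i.val (by omega))
  have hvi : i.val < n := ZMod.val_lt i
  have hvj : j.val < n := ZMod.val_lt j
  have hvij : j.val ≠ i.val := fun h => hji (hvalinj h)
  have hC1 : j.val ≠ (i.val + 1) % n := by
    intro h
    apply hji1
    apply hvalinj
    rw [h, ZMod.val_add, ZMod.val_one]
  have hC2 : i.val ≠ (j.val + 1) % n := by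
    intro h
    apply hji2
    have : i = j + 1 := by
      apply hvalinj
      rw [h, ZMod.val_add, ZMod.val_one]
    rw [this]
    ring
  have main : ∀ s t : ℕ, s < t → t < n → G.Adj (c s) (c t) →
      t ≠ s + 1 → ¬ (s = 0 ∧ t = n - 1) → False := by
    intro s t hst htn hadj' hsucc hwrap
    exact key s t (by omega) (by omega) hwrap hadj'
  rcases Nat.lt_or_ge i.val j.val with h | h
  · refine main i.val j.val h hvj hadjc ?_ ?_
    · intro hh
      exact hC1 (by rw [hh, Nat.mod_eq_of_lt (by omega)])
    · rintro ⟨h1, h2⟩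
      exact hC2 (by rw [h1, h2, show n - 1 + 1 = n from by omega, Nat.mod_self])
  · have h' : j.val < i.val := by omega
    refine main j.val i.val h' hvi hadjc.symm ?_ ?_
    · intro hh
      exact hC2 (by rw [hh, Nat.mod_eq_of_lt (by omega)])
    · rintro ⟨h1, h2⟩
      exact hC1 (by rw [h1, h2, show n - 1 + 1 = n from by omega, Nat.mod_self])

theorem dirac : ∀ (n : ℕ) (V : Type u) [Fintype V] (G : SimpleGraph V), Fintype.card V ≤ n →
    IsChordal G →
    (∀ v, Simpl G v) ∨ ∃ s t : V, s ≠ t ∧ ¬ G.Adj s t ∧ Simpl G s ∧ Simpl G t := by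
  intro n
  induction n with
  | zero =>
    intro V _ G hcard hch
    left
    intro v
    exact absurd (Fintype.card_pos_iff.mpr ⟨v⟩) (by omega)
  | succ n IH =>
    intro V _ G hcard hch
    classical
    by_cases hcomp : ∀ u v : V, u ≠ v → G.Adj u v
    · exact Or.inl fun v w1 w2 _ _ hne => hcomp _ _ hne
    push_neg at hcomp
    obtain ⟨a, b, hab, hnadjab⟩ := hcomp
    -- a separator exists
    have hCutex : ∃ k : ℕ, ∃ S : Finset V, S.card = k ∧ Cut G ↑S a b := by
      refine ⟨_, Finset.univ \ {a, b}, rfl, by simp, by simp [hab], ?_⟩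
      rintro ⟨m, g, h0, hm, hadj, hS⟩
      have hmem : ∀ i ≤ m, g i = a ∨ g i = b := by
        intro i hi
        have := hS i hi
        simp [Finset.mem_sdiff] at this
        tauto
      have hm1 : 1 ≤ m := by
        rcases Nat.eq_zero_or_pos m with rfl | h
        · exact absurd (h0 ▸ hm) hab
        · exact h
      have h1 := hadj 0 (by omega)
      rw [h0] at h1
      rcases hmem 1 (by omega) with h | h
      · rw [h] at h1; exact G.irrefl h1
      · rw [h] at h1; exact hnadjab h1
    obtain ⟨S, hScard, hSCut⟩ := Nat.find_spec hCutex
    have hSmincard : ∀ T : Finset V, Cut G ↑T a b → Nat.find hCutex ≤ T.card :=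
      fun T hT => Nat.find_min' hCutex ⟨T, rfl, hT⟩
    have hminS : ∀ x ∈ (↑S : Set V), ¬ Cut G ((↑S : Set V) \ {x}) a b := by
      intro x hxS hCut'
      rw [← Finset.coe_erase] at hCut'
      have h1 := hSmincard _ hCut'
      have hx : x ∈ S := hxS
      have h2 := Finset.card_erase_of_mem hx
      have h3 := Finset.card_pos.mpr ⟨x, hx⟩
      omega
    have hSclique := sep_clique hch hSCut hminS
    -- side lemma
    have side : ∀ a' b' : V, Cut G ↑S a' b' → (∀ x ∈ (↑S : Set V), ¬ Cut G ((↑S : Set V) \ {x}) a' b') →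
        ∃ u, CReach G ↑S a' u ∧ Simpl G u := by
      intro a' b' hCut hmn
      set W : Set V := {u | CReach G (↑S : Set V) a' u} ∪ ↑S with hW
      haveI : Fintype ↥W := Fintype.ofFinite _
      have hmemW : ∀ {u : V}, CReach G (↑S : Set V) a' u → u ∈ W := fun h => Or.inl h
      have hbW : b' ∉ W := by
        rintro (h | h)
        · exact hCut.2.2 h
        · exact hCut.2.1 h
      have hcardW : Fintype.card ↥W ≤ n := by
        have hlt : Fintype.card ↥W < Fintype.card V := Fintype.card_lt_of_injective_of_notMem
          (Subtype.val : ↥W → V) Subtype.coe_injective (b := b')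
          (by rintro ⟨⟨w, hw⟩, rfl⟩; exact hbW hw)
        omega
      have hlift : ∀ (u : V) (hu : CReach G (↑S : Set V) a' u),
          Simpl (G.induce W) ⟨u, Or.inl hu⟩ → Simpl G u := by
        intro u hu hsimp w1 w2 h1 h2 hne
        have hw1 : w1 ∈ W := by
          by_cases h : w1 ∈ (↑S : Set V)
          · exact Or.inr h
          · exact Or.inl (hu.step h1 h)
        have hw2 : w2 ∈ W := by
          by_cases h : w2 ∈ (↑S : Set V)
          · exact Or.inr h
          · exact Or.inl (hu.step h2 h)
        have := hsimp ⟨w1, hw1⟩ ⟨w2, hw2⟩ (by simpa using h1) (by simpa using h2)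
          (by intro hh; exact hne (congrArg Subtype.val hh))
        simpa using this
      rcases IH ↥W (G.induce W) hcardW (isChordal_induce hch W) with hall | ⟨s, t, hst, hnadj, hs, ht⟩
      · have ha' : CReach G (↑S : Set V) a' a' := CReach.refl hCut.1
        exact ⟨a', ha', hlift a' ha' (hall _)⟩
      · have hnotboth : ¬ ((s : V) ∈ (↑S : Set V) ∧ (t : V) ∈ (↑S : Set V)) := by
          rintro ⟨h1, h2⟩
          apply hnadj
          have : G.Adj ↑s ↑t := hSclique _ h1 _ h2 (fun h => hst (Subtype.ext h))
          simpa using this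
        rcases s.2 with hsA | hsS
        · refine ⟨↑s, hsA, hlift ↑s hsA ?_⟩
          convert hs using 2
        · rcases t.2 with htA | htS
          · refine ⟨↑t, htA, hlift ↑t htA ?_⟩
            convert ht using 2
          · exact absurd ⟨hsS, htS⟩ hnotboth
    obtain ⟨uA, huA, hsA⟩ := side a b hSCut hminS
    obtain ⟨uB, huB, hsB⟩ := side b a hSCut.symm (fun x hx h => hminS x hx h.symm)
    refine Or.inr ⟨uA, uB, ?_, ?_, hsA, hsB⟩
    · rintro rfl
      exact hSCut.2.2 (huA.trans huB.symm)
    · intro hadj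
      exact hSCut.2.2 ((huA.step hadj huB.notMem_right).trans huB.symm)

lemma exists_simplicial (V : Type u) [Fintype V] [Nonempty V] (G : SimpleGraph V)
    (hch : IsChordal G) : ∃ v, Simpl G v := by
  rcases dirac (Fintype.card V) V G le_rfl hch with h | ⟨s, _, _, _, hs, _⟩
  · exact ⟨Classical.arbitrary V, h _⟩
  · exact ⟨s, hs⟩

end

end ChordalAux

namespace ChordalAux

variable {V : Type*} [Fintype V] [DecidableEq V]

lemma sum_subtype_of_vanish (C : Finset V) (F : V → ℝ) (h : ∀ j ∉ C, F j = 0) :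
    ∑ j : V, F j = ∑ j : ↥C, F ↑j := by
  calc ∑ j : V, F j = ∑ j ∈ C, F j :=
        (Finset.sum_subset (Finset.subset_univ C) (fun x _ hx => h x hx)).symm
    _ = ∑ j : ↥C, F ↑j := (Finset.sum_coe_sort C F).symm

lemma cliqueEmbed_apply_of_mem (C : Finset V) (Y : Matrix C C ℝ) {i j : V}
    (hi : i ∈ C) (hj : j ∈ C) : cliqueEmbed C Y i j = Y ⟨i, hi⟩ ⟨j, hj⟩ := by
  simp [cliqueEmbed, hi, hj]

lemma cliqueEmbed_apply_zero (C : Finset V) (Y : Matrix C C ℝ) {i j : V}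
    (h : i ∉ C ∨ j ∉ C) : cliqueEmbed C Y i j = 0 := by
  rcases h with h | h <;> simp [cliqueEmbed, h] <;> intro h' <;> simp [h]

lemma mulVec_cliqueEmbed (C : Finset V) (Y : Matrix C C ℝ) (x : V → ℝ) {i : V} (hi : i ∈ C) :
    (cliqueEmbed C Y *ᵥ x) i = ∑ j : ↥C, Y ⟨i, hi⟩ j * x ↑j := by
  show ∑ j : V, cliqueEmbed C Y i j * x j = _
  rw [sum_subtype_of_vanish C _ (fun j hj => by rw [cliqueEmbed_apply_zero C Y (Or.inr hj), zero_mul])]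
  exact Finset.sum_congr rfl fun j _ => by rw [cliqueEmbed_apply_of_mem C Y hi j.2, Subtype.coe_eta]

lemma dot_cliqueEmbed (C : Finset V) (Y : Matrix C C ℝ) (x : V → ℝ) :
    x ⬝ᵥ (cliqueEmbed C Y *ᵥ x) = (fun i : ↥C => x ↑i) ⬝ᵥ (Y *ᵥ fun i : ↥C => x ↑i) := by
  show ∑ i : V, x i * (cliqueEmbed C Y *ᵥ x) i = ∑ i : ↥C, x ↑i * (Y *ᵥ fun k : ↥C => x ↑k) i
  rw [sum_subtype_of_vanish C _ (fun i hi => by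
    have : (cliqueEmbed C Y *ᵥ x) i = 0 := by
      show ∑ j : V, cliqueEmbed C Y i j * x j = 0
      refine Finset.sum_eq_zero fun j _ => by rw [cliqueEmbed_apply_zero C Y (Or.inl hi), zero_mul]
    rw [this, mul_zero])]
  refine Finset.sum_congr rfl fun i _ => ?_
  rw [mulVec_cliqueEmbed C Y x i.2]
  rfl

lemma isHermitian_cliqueEmbed {C : Finset V} {Y : Matrix C C ℝ} (hY : Y.IsHermitian) :
    (cliqueEmbed C Y).IsHermitian := by
  have hY' : ∀ p q, Y q p = Y p q := fun p q => by
    conv_lhs => rw [← hY]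
    simp [conjTranspose_apply]
  ext i j
  simp only [conjTranspose_apply, star_trivial]
  by_cases hi : i ∈ C <;> by_cases hj : j ∈ C
  · rw [cliqueEmbed_apply_of_mem C Y hj hi, cliqueEmbed_apply_of_mem C Y hi hj, hY']
  · rw [cliqueEmbed_apply_zero C Y (Or.inl hj), cliqueEmbed_apply_zero C Y (Or.inr hj)]
  · rw [cliqueEmbed_apply_zero C Y (Or.inr hi), cliqueEmbed_apply_zero C Y (Or.inl hi)]
  · rw [cliqueEmbed_apply_zero C Y (Or.inl hj), cliqueEmbed_apply_zero C Y (Or.inl hi)]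

lemma posSemidef_cliqueEmbed {C : Finset V} {Y : Matrix C C ℝ} (hY : Y.PosSemidef) :
    (cliqueEmbed C Y).PosSemidef := by
  refine posSemidef_iff_dotProduct_mulVec.mpr ⟨isHermitian_cliqueEmbed hY.1, fun x => ?_⟩
  have h := hY.dotProduct_mulVec_nonneg (fun i : ↥C => x ↑i)
  rw [star_trivial] at h ⊢
  rwa [dot_cliqueEmbed]

/-- restriction of a matrix supported on `C` -/
lemma cliqueEmbed_restrict {M : Matrix V V ℝ} {C : Finset V}
    (h : ∀ i j, i ∉ C ∨ j ∉ C → M i j = 0) :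
    cliqueEmbed C (M.submatrix ((↑) : ↥C → V) (↑)) = M := by
  ext i j
  by_cases hi : i ∈ C <;> by_cases hj : j ∈ C
  · rw [cliqueEmbed_apply_of_mem _ _ hi hj]; rfl
  · rw [cliqueEmbed_apply_zero _ _ (Or.inr hj), h i j (Or.inr hj)]
  · rw [cliqueEmbed_apply_zero _ _ (Or.inl hi), h i j (Or.inl hi)]
  · rw [cliqueEmbed_apply_zero _ _ (Or.inl hi), h i j (Or.inl hi)]

/-- embed a matrix indexed by `s` into one indexed by `t` -/
def embedIn (s t : Finset V) (Y : Matrix s s ℝ) : Matrix t t ℝ :=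
  (cliqueEmbed s Y).submatrix ((↑) : ↥t → V) (↑)

lemma posSemidef_embedIn {s : Finset V} (t : Finset V) {Y : Matrix s s ℝ} (hY : Y.PosSemidef) :
    (embedIn s t Y).PosSemidef :=
  (posSemidef_cliqueEmbed hY).submatrix _

lemma cliqueEmbed_embedIn {s t : Finset V} (hst : s ⊆ t) (Y : Matrix s s ℝ) :
    cliqueEmbed t (embedIn s t Y) = cliqueEmbed s Y := by
  ext i j
  by_cases hi : i ∈ s <;> by_cases hj : j ∈ s
  · rw [cliqueEmbed_apply_of_mem t _ (hst hi) (hst hj), cliqueEmbed_apply_of_mem s Y hi hj]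
    show cliqueEmbed s Y i j = _
    rw [cliqueEmbed_apply_of_mem s Y hi hj]
  · rw [cliqueEmbed_apply_zero s Y (Or.inr hj)]
    by_cases hit : i ∈ t <;> by_cases hjt : j ∈ t
    · rw [cliqueEmbed_apply_of_mem t _ hit hjt]
      show cliqueEmbed s Y i j = 0
      rw [cliqueEmbed_apply_zero s Y (Or.inr hj)]
    · rw [cliqueEmbed_apply_zero t _ (Or.inr hjt)]
    · rw [cliqueEmbed_apply_zero t _ (Or.inl hit)]
    · rw [cliqueEmbed_apply_zero t _ (Or.inl hit)]
  · rw [cliqueEmbed_apply_zero s Y (Or.inl hi)]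
    by_cases hit : i ∈ t <;> by_cases hjt : j ∈ t
    · rw [cliqueEmbed_apply_of_mem t _ hit hjt]
      show cliqueEmbed s Y i j = 0
      rw [cliqueEmbed_apply_zero s Y (Or.inl hi)]
    · rw [cliqueEmbed_apply_zero t _ (Or.inr hjt)]
    · rw [cliqueEmbed_apply_zero t _ (Or.inl hit)]
    · rw [cliqueEmbed_apply_zero t _ (Or.inl hit)]
  · rw [cliqueEmbed_apply_zero s Y (Or.inl hi)]
    by_cases hit : i ∈ t <;> by_cases hjt : j ∈ t
    · rw [cliqueEmbed_apply_of_mem t _ hit hjt]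
      show cliqueEmbed s Y i j = 0
      rw [cliqueEmbed_apply_zero s Y (Or.inl hi)]
    · rw [cliqueEmbed_apply_zero t _ (Or.inr hjt)]
    · rw [cliqueEmbed_apply_zero t _ (Or.inl hit)]
    · rw [cliqueEmbed_apply_zero t _ (Or.inl hit)]

/-- `cliqueEmbed` as an additive monoid hom -/
def cliqueEmbedHom (C : Finset V) : Matrix C C ℝ →+ Matrix V V ℝ where
  toFun := cliqueEmbed C
  map_zero' := by
    show cliqueEmbed C 0 = 0
    ext i j
    by_cases hi : i ∈ C <;> by_cases hj : j ∈ C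
    · rw [cliqueEmbed_apply_of_mem C _ hi hj]; rfl
    · rw [cliqueEmbed_apply_zero C _ (Or.inr hj)]; rfl
    · rw [cliqueEmbed_apply_zero C _ (Or.inl hi)]; rfl
    · rw [cliqueEmbed_apply_zero C _ (Or.inl hi)]; rfl
  map_add' := by
    intro A B
    show cliqueEmbed C (A + B) = cliqueEmbed C A + cliqueEmbed C B
    ext i j
    by_cases hi : i ∈ C <;> by_cases hj : j ∈ C
    · rw [Matrix.add_apply, cliqueEmbed_apply_of_mem C _ hi hj,
        cliqueEmbed_apply_of_mem C _ hi hj, cliqueEmbed_apply_of_mem C _ hi hj]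
      rfl
    · rw [Matrix.add_apply, cliqueEmbed_apply_zero _ _ (Or.inr hj),
        cliqueEmbed_apply_zero _ _ (Or.inr hj), cliqueEmbed_apply_zero _ _ (Or.inr hj)]
      norm_num
    · rw [Matrix.add_apply, cliqueEmbed_apply_zero _ _ (Or.inl hi),
        cliqueEmbed_apply_zero _ _ (Or.inl hi), cliqueEmbed_apply_zero _ _ (Or.inl hi)]
      norm_num
    · rw [Matrix.add_apply, cliqueEmbed_apply_zero _ _ (Or.inl hi),
        cliqueEmbed_apply_zero _ _ (Or.inl hi), cliqueEmbed_apply_zero _ _ (Or.inl hi)]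
      norm_num

lemma cliqueEmbed_sum {ι : Type*} (f : Finset ι) (C : Finset V) (F : ι → Matrix C C ℝ) :
    cliqueEmbed C (∑ i ∈ f, F i) = ∑ i ∈ f, cliqueEmbed C (F i) :=
  map_sum (cliqueEmbedHom C) F f

lemma posSemidef_sum {ι : Type*} (f : Finset ι) (F : ι → Matrix V V ℝ)
    (h : ∀ i ∈ f, (F i).PosSemidef) : (∑ i ∈ f, F i).PosSemidef := by
  classical
  induction f using Finset.induction with
  | empty => simpa using Matrix.PosSemidef.zero
  | insert a s hx ih =>
    rw [Finset.sum_insert hx]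
    exact (h _ (Finset.mem_insert_self _ _)).add (ih fun i hi => h i (Finset.mem_insert_of_mem hi))

lemma mulVec_single_old (M : Matrix V V ℝ) (j : V) (x : ℝ) :
    M *ᵥ Pi.single j x = fun i => M i j * x :=
  funext fun _ => dotProduct_single _ _ _

/-- a PSD matrix with zero diagonal entry has zero row -/
lemma psd_row_eq_zero {M : Matrix V V ℝ} (hM : M.PosSemidef) {v : V} (hv : M v v = 0) (j : V) :
    M v j = 0 := by
  by_cases hj : j = v
  · rw [hj, hv]
  have hsymm : ∀ p q, M q p = M p q := fun p q => by
    conv_lhs => rw [← hM.1]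
    simp [conjTranspose_apply]
  have hdiag : 0 ≤ M j j := by
    have := hM.dotProduct_mulVec_nonneg (Pi.single j 1)
    rwa [star_trivial, mulVec_single_old, dotProduct, Finset.sum_eq_single j
      (fun b _ hb => by simp [Pi.single_eq_of_ne hb]) (by simp), Pi.single_eq_same,
      one_mul, mul_one] at this
  set a := M j j with ha
  set b := M v j with hb
  have key : ∀ t : ℝ, 0 ≤ 2 * t * b + t ^ 2 * a := by
    intro t
    have h2 := hM.dotProduct_mulVec_nonneg ((Pi.single v 1 : V → ℝ) + t • (Pi.single j 1 : V → ℝ))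
    rw [star_trivial] at h2
    have hw : (M *ᵥ ((Pi.single v 1 : V → ℝ) + t • (Pi.single j 1 : V → ℝ))) =
        fun i => M i v + t * M i j := by
      funext i
      rw [mulVec_add, mulVec_smul, mulVec_single_old, mulVec_single_old]
      simp
    rw [hw, add_dotProduct, smul_dotProduct, single_dotProduct, single_dotProduct] at h2
    simp only [smul_eq_mul, one_mul] at h2
    rw [hv, hsymm v j] at h2
    ring_nf at h2 ⊢
    nlinarith [h2]
  by_contra hbne
  have hb2 : 0 < b ^ 2 := by positivity
  rcases eq_or_lt_of_le hdiag with haz | hap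
  · have ht := key (-b)
    rw [← haz] at ht
    nlinarith [hb2]
  · have ht := key (-(b / a))
    have hb2' : (-(b / a)) ^ 2 * a + 2 * (-(b / a)) * b = - (b ^ 2 / a) := by
      field_simp
      ring
    have hz : 0 < b ^ 2 / a := div_pos hb2 hap
    linarith [ht, hb2', hz]

lemma psd_diag_nonneg {M : Matrix V V ℝ} (hM : M.PosSemidef) (v : V) : 0 ≤ M v v := by
  have := hM.dotProduct_mulVec_nonneg (Pi.single v 1)
  rwa [star_trivial, mulVec_single_old, dotProduct, Finset.sum_eq_single v
    (fun b _ hb => by simp [Pi.single_eq_of_ne hb]) (by simp), Pi.single_eq_same,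
    one_mul, mul_one] at this

lemma psd_symm_apply {M : Matrix V V ℝ} (hM : M.PosSemidef) (p q : V) : M q p = M p q := by
  conv_lhs => rw [← hM.1]
  simp [conjTranspose_apply]

theorem decomp : ∀ (N : ℕ) {V : Type u} [Fintype V] [DecidableEq V] (G : SimpleGraph V)
    (T : Finset V), T.card ≤ N → IsChordal G →
    ∀ X : Matrix V V ℝ, X.PosSemidef →
    (∀ i j, i ≠ j → ¬ G.Adj i j → X i j = 0) →
    (∀ i j, i ∉ T ∨ j ∉ T → X i j = 0) →
    ∃ (m : ℕ) (s : ℕ → Finset V) (Y : ∀ i, Matrix (s i) (s i) ℝ),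
      (∀ i, G.IsClique ((s i : Set V))) ∧ (∀ i, (Y i).PosSemidef) ∧
      X = ∑ i ∈ Finset.range m, cliqueEmbed (s i) (Y i) := by
  intro N
  induction N with
  | zero =>
    intro V _ _ G T hcard hch X hX hsparse hsupp
    have hT : T = ∅ := Finset.card_eq_zero.mp (by omega)
    refine ⟨0, fun _ => ∅, fun _ => 0, fun i => by simp, fun i => Matrix.PosSemidef.zero, ?_⟩
    rw [Finset.range_zero, Finset.sum_empty]
    ext i j
    exact hsupp i j (Or.inl (by simp [hT]))
  | succ N IH =>
    intro V _ _ G T hcard hch X hX hsparse hsupp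
    classical
    rcases T.eq_empty_or_nonempty with hT | ⟨w, hw⟩
    · refine ⟨0, fun _ => ∅, fun _ => 0, fun i => by simp, fun i => Matrix.PosSemidef.zero, ?_⟩
      rw [Finset.range_zero, Finset.sum_empty]
      ext i j
      exact hsupp i j (Or.inl (by simp [hT]))
    haveI : Nonempty ↥((↑T : Set V)) := ⟨⟨w, hw⟩⟩
    obtain ⟨v₀, hv₀⟩ := exists_simplicial ↥((↑T : Set V)) (G.induce (↑T : Set V))
      (isChordal_induce hch (↑T : Set V))
    set v : V := ↑v₀ with hvdef
    have hvT : v ∈ T := v₀.2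
    have hsymm := psd_symm_apply hX
    have hsimp : ∀ i j, i ∈ T → j ∈ T → i ≠ j → i ≠ v → j ≠ v →
        G.Adj v i → G.Adj v j → G.Adj i j := by
      intro i j hi hj hij hiv hjv hvi hvj
      have h := hv₀ ⟨i, hi⟩ ⟨j, hj⟩ (by simpa using hvi) (by simpa using hvj)
        (fun h => hij (congrArg Subtype.val h))
      simpa using h
    set K : Finset V := T.filter (fun u => u = v ∨ G.Adj v u) with hKdef
    have hKT : K ⊆ T := Finset.filter_subset _ _
    have hvK : v ∈ K := Finset.mem_filter.mpr ⟨hvT, Or.inl rfl⟩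
    have hmemK : ∀ {u}, u ∈ K → u ∈ T ∧ (u = v ∨ G.Adj v u) := fun h => Finset.mem_filter.mp h
    have hKclique : G.IsClique (↑K : Set V) := by
      rw [SimpleGraph.isClique_iff]
      intro i hi j hj hij
      obtain ⟨hiT, hi2⟩ := hmemK (Finset.mem_coe.mp hi)
      obtain ⟨hjT, hj2⟩ := hmemK (Finset.mem_coe.mp hj)
      rcases hi2 with rfl | hvi
      · rcases hj2 with rfl | hvj
        · exact absurd rfl hij
        · exact hvj
      · rcases hj2 with rfl | hvj
        · exact hvi.symm
        · exact hsimp i j hiT hjT hij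
            (fun h => by rw [h] at hvi; exact G.irrefl hvi)
            (fun h => by rw [h] at hvj; exact G.irrefl hvj) hvi hvj
    have hcarderase : (T.erase v).card ≤ N := by
      have h1 := Finset.card_erase_of_mem hvT
      have h2 := Finset.card_pos.mpr ⟨v, hvT⟩
      omega
    by_cases hd0 : X v v = 0
    · have hrow : ∀ j, X v j = 0 := psd_row_eq_zero hX hd0
      have hcol : ∀ i, X i v = 0 := fun i => by rw [hsymm v i]; exact hrow i
      refine IH G (T.erase v) hcarderase hch X hX hsparse ?_
      intro i j hij
      rcases hij with hi | hj
      · rw [Finset.mem_erase] at hi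
        push_neg at hi
        by_cases hiT : i ∈ T
        · rw [show i = v from by by_contra h; exact hi h hiT]; exact hrow j
        · exact hsupp i j (Or.inl hiT)
      · rw [Finset.mem_erase] at hj
        push_neg at hj
        by_cases hjT : j ∈ T
        · rw [show j = v from by by_contra h; exact hj h hjT]; exact hcol i
        · exact hsupp i j (Or.inr hjT)
    · set d : ℝ := X v v with hddef
      have hdpos : 0 < d := lt_of_le_of_ne (psd_diag_nonneg hX v) (Ne.symm hd0)
      set c : V → ℝ := fun j => X v j with hcdef
      have hcv : c v = d := rfl
      set R : Matrix V V ℝ := Matrix.of (fun i j => c i * c j / d) with hRdef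
      have hRapp : ∀ i j, R i j = c i * c j / d := fun i j => rfl
      have hczero : ∀ i, i ∉ K → c i = 0 := by
        intro i hiK
        by_cases hiT : i ∈ T
        · have hiv : i ≠ v := fun h => hiK (h ▸ hvK)
          have hnadj : ¬ G.Adj v i := fun h =>
            hiK (Finset.mem_filter.mpr ⟨hiT, Or.inr h⟩)
          exact hsparse v i (Ne.symm hiv) hnadj
        · exact hsupp v i (Or.inr hiT)
      have hRmv : ∀ x : V → ℝ, R *ᵥ x = fun i => c i * ((c ⬝ᵥ x) / d) := by
        intro x
        funext i
        show ∑ j : V, R i j * x j = _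
        have h1 : ∀ j : V, R i j * x j = c i * (c j * x j) / d := fun j => by
          rw [hRapp]; ring
        rw [Finset.sum_congr rfl (fun j _ => h1 j), ← Finset.sum_div, ← Finset.mul_sum]
        rw [mul_div_assoc]
        rfl
      have hRquad : ∀ x : V → ℝ, x ⬝ᵥ (R *ᵥ x) = (c ⬝ᵥ x) ^ 2 / d := by
        intro x
        rw [hRmv]
        show ∑ i : V, x i * (c i * ((c ⬝ᵥ x) / d)) = _
        have h1 : ∀ i : V, x i * (c i * ((c ⬝ᵥ x) / d)) = (c i * x i) * ((c ⬝ᵥ x) / d) :=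
          fun i => by ring
        rw [Finset.sum_congr rfl (fun i _ => h1 i), ← Finset.sum_mul]
        show (c ⬝ᵥ x) * ((c ⬝ᵥ x) / d) = _
        ring
      have hRherm : R.IsHermitian := by
        ext i j
        rw [conjTranspose_apply, star_trivial, hRapp, hRapp]
        ring
      have hRpsd : R.PosSemidef := by
        refine posSemidef_iff_dotProduct_mulVec.mpr ⟨hRherm, fun x => ?_⟩
        rw [star_trivial, hRquad]
        positivity
      have hXv : ∀ x : V → ℝ, (X *ᵥ x) v = c ⬝ᵥ x := fun x => rfl
      have hdne : d ≠ 0 := ne_of_gt hdpos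
      have hXquad : ∀ x : V → ℝ, (c ⬝ᵥ x) ^ 2 / d ≤ x ⬝ᵥ (X *ᵥ x) := by
        intro x
        set t : ℝ := -((c ⬝ᵥ x) / d) with htdef
        have h2 := hX.dotProduct_mulVec_nonneg (x + t • (Pi.single v 1 : V → ℝ))
        rw [star_trivial, mulVec_add, mulVec_smul, mulVec_single_old] at h2
        rw [dotProduct_add, add_dotProduct, add_dotProduct, dotProduct_smul,
          smul_dotProduct, smul_dotProduct, single_dotProduct, dotProduct_smul] at h2
        have hA2 : (x ⬝ᵥ fun i => X i v * 1) = c ⬝ᵥ x := by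
          show ∑ i : V, x i * (X i v * 1) = ∑ i : V, c i * x i
          refine Finset.sum_congr rfl fun i _ => ?_
          rw [mul_one, hsymm v i]
          show x i * X v i = X v i * x i
          ring
        have hA3 : ((Pi.single v 1 : V → ℝ) ⬝ᵥ fun i => X i v * 1) = d := by
          rw [single_dotProduct, one_mul, mul_one]
        rw [one_mul, hXv x, hA2, hA3] at h2
        simp only [smul_eq_mul] at h2
        have e1 : t * (c ⬝ᵥ x) = -((c ⬝ᵥ x) ^ 2 / d) := by
          rw [htdef, neg_mul, div_mul_eq_mul_div, ← pow_two]
        have e2 : t * (t * d) = (c ⬝ᵥ x) ^ 2 / d := by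
          rw [htdef]; field_simp
        rw [e1, e2] at h2
        linarith
      set X' : Matrix V V ℝ := X - R with hX'def
      have hX'psd : X'.PosSemidef := by
        refine posSemidef_iff_dotProduct_mulVec.mpr ⟨hX.1.sub hRherm, fun x => ?_⟩
        rw [star_trivial, hX'def, sub_mulVec, dotProduct_sub, hRquad]
        have := hXquad x
        linarith
      have hX'app : ∀ i j, X' i j = X i j - c i * c j / d := fun i j => by
        rw [hX'def, Matrix.sub_apply, hRapp]
      have hX'rowv : ∀ j, X' v j = 0 := by
        intro j
        rw [hX'app, hcv]
        show X v j - d * c j / d = 0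
        rw [mul_comm, mul_div_assoc, div_self (ne_of_gt hdpos), mul_one]
        show c j - c j = 0
        ring
      have hX'colv : ∀ i, X' i v = 0 := by
        intro i
        rw [hX'app, hcv]
        rw [mul_div_assoc, div_self (ne_of_gt hdpos), mul_one, hsymm v i]
        show c i - c i = 0
        ring
      have hX'sparse : ∀ i j, i ≠ j → ¬ G.Adj i j → X' i j = 0 := by
        intro i j hij hnadj
        by_cases hiv : i = v
        · rw [hiv]; exact hX'rowv j
        by_cases hjv : j = v
        · rw [hjv]; exact hX'colv i
        rw [hX'app, hsparse i j hij hnadj]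
        by_cases hiK : i ∈ K
        · by_cases hjK : j ∈ K
          · obtain ⟨hiT, hi2⟩ := hmemK hiK
            obtain ⟨hjT, hj2⟩ := hmemK hjK
            rcases hi2 with h | hvi
            · exact absurd h hiv
            rcases hj2 with h | hvj
            · exact absurd h hjv
            exact absurd (hsimp i j hiT hjT hij hiv hjv hvi hvj) hnadj
          · rw [hczero j hjK]; ring
        · rw [hczero i hiK]; ring
      have hX'supp : ∀ i j, i ∉ T.erase v ∨ j ∉ T.erase v → X' i j = 0 := by
        intro i j hij
        rcases hij with hi | hj
        · rw [Finset.mem_erase] at hi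
          push_neg at hi
          by_cases hiT : i ∈ T
          · rw [show i = v from by by_contra h; exact hi h hiT]; exact hX'rowv j
          · rw [hX'app, hsupp i j (Or.inl hiT), hczero i (fun h => hiT (hKT h))]; ring
        · rw [Finset.mem_erase] at hj
          push_neg at hj
          by_cases hjT : j ∈ T
          · rw [show j = v from by by_contra h; exact hj h hjT]; exact hX'colv i
          · rw [hX'app, hsupp i j (Or.inr hjT), hczero j (fun h => hjT (hKT h))]; ring
      have hRsupp : ∀ i j, i ∉ K ∨ j ∉ K → R i j = 0 := by
        intro i j hij
        rw [hRapp]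
        rcases hij with h | h
        · rw [hczero i h]; ring
        · rw [hczero j h]; ring
      obtain ⟨m, s, Y, hclq, hpsd, hsum⟩ := IH G (T.erase v) hcarderase hch X' hX'psd
        hX'sparse hX'supp
      set s' : ℕ → Finset V := fun i => Nat.rec K (fun j _ => s j) i with hs'def
      set Y' : ∀ i : ℕ, Matrix (s' i) (s' i) ℝ :=
        fun i => Nat.rec (motive := fun i => Matrix (s' i) (s' i) ℝ)
          (R.submatrix (↑) (↑)) (fun j _ => Y j) i with hY'def
      refine ⟨m + 1, s', Y', ?_, ?_, ?_⟩
      · intro i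
        cases i with
        | zero => exact hKclique
        | succ j => exact hclq j
      · intro i
        cases i with
        | zero => exact hRpsd.submatrix _
        | succ j => exact hpsd j
      · rw [Finset.sum_range_succ']
        have h1 : ∑ i ∈ Finset.range m, cliqueEmbed (s' (i + 1)) (Y' (i + 1)) =
            ∑ i ∈ Finset.range m, cliqueEmbed (s i) (Y i) :=
          Finset.sum_congr rfl fun i _ => rfl
        rw [h1, ← hsum]
        show X = X' + cliqueEmbed K (R.submatrix (↑) (↑))
        rw [cliqueEmbed_restrict hRsupp, hX'def]
        abel

end ChordalAux

/-- Agler–Helton–McCullough–Rodman chordal decomposition: a symmetric matrix with the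
sparsity pattern of a chordal graph `G` with maximal cliques `C_1, …, C_p` is PSD iff it
decomposes as a sum `Σ_k E_kᵀ X_k E_k` of PSD matrices supported on the cliques. -/
theorem chordal_psd_decomposition {V : Type*} [Fintype V] [DecidableEq V]
    (G : SimpleGraph V) (hchordal : IsChordal G)
    (p : ℕ) (C : Fin p → Finset V)
    (hclique : ∀ k, G.IsClique (C k : Set V))
    (hmaximal : ∀ k, ∀ s : Set V, G.IsClique s → (C k : Set V) ⊆ s → s = (C k : Set V))
    (hall : ∀ s : Set V, G.IsClique s → (∀ t : Set V, G.IsClique t → s ⊆ t → t = s) →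
      ∃ k, s = (C k : Set V))
    (X : Matrix V V ℝ) (hXsymm : X.IsSymm)
    (hsparse : ∀ i j, i ≠ j → ¬ G.Adj i j → X i j = 0) :
    X.PosSemidef ↔
      ∃ Y : ∀ k, Matrix (C k) (C k) ℝ,
        (∀ k, (Y k).PosSemidef) ∧ X = ∑ k, cliqueEmbed (C k) (Y k) := by
  classical
  constructor
  · intro hX
    obtain ⟨m, s, Y, hclq, hpsd, hsum⟩ := ChordalAux.decomp (Fintype.card V) G Finset.univ
      (le_of_eq (Finset.card_univ)) hchordal X hX hsparse
      (fun i j h => by rcases h with h | h <;> exact absurd (Finset.mem_univ _) h)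
    have extend : ∀ i : ℕ, ∃ k, s i ⊆ C k := by
      intro i
      obtain ⟨t, htF, htmax⟩ := Finset.exists_max_image
        (Finset.univ.filter (fun t : Finset V => G.IsClique (↑t : Set V) ∧ s i ⊆ t))
        Finset.card ⟨s i, by simp [hclq i]⟩
      rw [Finset.mem_filter] at htF
      obtain ⟨-, htclique, hsub⟩ := htF
      have hmax : ∀ u : Set V, G.IsClique u → (↑t : Set V) ⊆ u → u = ↑t := by
        intro u hu htu
        have hufin : u.Finite := Set.toFinite u
        have h1 : t ⊆ hufin.toFinset := fun z hz => hufin.mem_toFinset.mpr (htu hz)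
        have h2 : G.IsClique (↑hufin.toFinset : Set V) := by rwa [Set.Finite.coe_toFinset]
        have h3 : s i ⊆ hufin.toFinset := hsub.trans h1
        have h4 := htmax hufin.toFinset
          (Finset.mem_filter.mpr ⟨Finset.mem_univ _, h2, h3⟩)
        have h5 := Finset.eq_of_subset_of_card_le h1 h4
        rw [← hufin.coe_toFinset, h5]
      obtain ⟨k, hk⟩ := hall (↑t : Set V) htclique hmax
      have ht : t = C k := Finset.coe_injective hk
      exact ⟨k, ht ▸ hsub⟩
    choose κ hκ using extend
    refine ⟨fun k => ∑ i ∈ (Finset.range m).filter (fun i => κ i = k),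
      ChordalAux.embedIn (s i) (C k) (Y i), fun k => ?_, ?_⟩
    · exact ChordalAux.posSemidef_sum _ _ fun i _ => ChordalAux.posSemidef_embedIn _ (hpsd i)
    · rw [hsum]
      have h1 : ∀ k : Fin p, cliqueEmbed (C k)
          (∑ i ∈ (Finset.range m).filter (fun i => κ i = k),
            ChordalAux.embedIn (s i) (C k) (Y i)) =
          ∑ i ∈ (Finset.range m).filter (fun i => κ i = k), cliqueEmbed (s i) (Y i) := by
        intro k
        rw [ChordalAux.cliqueEmbed_sum]
        refine Finset.sum_congr rfl fun i hi => ?_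
        rw [Finset.mem_filter] at hi
        exact ChordalAux.cliqueEmbed_embedIn (hi.2 ▸ hκ i) (Y i)
      rw [Finset.sum_congr rfl (fun k _ => h1 k)]
      exact (Finset.sum_fiberwise_of_maps_to (fun i _ => Finset.mem_univ (κ i)) _).symm
  · rintro ⟨Y, hY, rfl⟩
    exact ChordalAux.posSemidef_sum _ _ fun k _ => ChordalAux.posSemidef_cliqueEmbed (hY k)
end
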